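/- arXiv:2506.04647 — 3 statements merged into one kernel-verified Lean document; each statement's English description precedes it below -/
import Mathlib

section
/- Let α be a type, h : α → α → α any function, and d a natural number. For leaves L : Fin (2^d) → α define the Merkle root recursively by Root(0, L) = L(0) and Root(d+1, L) = h(Root(d, L restricted to the first 2^d indices), Root(d, L restricted to the last 2^d indices)). For an index i ∈ Fin (2^d), define the authentication path sib(d, L, i) : Fin d → α recursively so that sib lists, from the leaf level upward, the roots of the sibling subtrees along the path from leaf i to the root, and define the verification fold fold(d, i, x, s) by starting with x and, for k = 0,…,d−1, combining acc with s(k) via acc ↦ h(acc, s(k)) if the k-th binary digit of i is 0 and acc ↦ h(s(k), acc) if it is 1. Then for every i, fold(d, i, L(i), sib(d, L, i)) = Root(d, L). -/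
/-- The root of a complete Merkle tree of depth `d` over leaves `L : Fin (2^d) → α`,
built with the two-argument hash `h`. -/
def merkleRoot {α : Type*} (h : α → α → α) : (d : ℕ) → (Fin (2 ^ d) → α) → α
  | 0, L => L ⟨0, by norm_num⟩
  | d + 1, L =>
      h (merkleRoot h d (fun i => L ⟨i.val, by
            have := i.isLt; have : (2:ℕ) ^ d ≤ 2 ^ (d+1) := Nat.pow_le_pow_right (by norm_num) (by omega)
            omega⟩))
        (merkleRoot h d (fun i => L ⟨2 ^ d + i.val, by
            have := i.isLt; have h2 : (2:ℕ) ^ (d+1) = 2 ^ d + 2 ^ d := by ring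
            omega⟩))

/-- The authentication path of leaf `i`: the roots of the sibling subtrees along the
path from leaf `i` to the root, listed from the leaf level upward. -/
def merkleSib {α : Type*} (h : α → α → α) : (d : ℕ) → (Fin (2 ^ d) → α) → Fin (2 ^ d) → Fin d → α
  | 0, _, _ => fun k => k.elim0
  | d + 1, L, i => fun k =>
      if hi : i.val < 2 ^ d then
        -- leaf in the left half
        if hk : k.val < d then
          merkleSib h d (fun j => L ⟨j.val, by
              have := j.isLt
              have : (2:ℕ) ^ d ≤ 2 ^ (d+1) := Nat.pow_le_pow_right (by norm_num) (by omega)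
              omega⟩) ⟨i.val, hi⟩ ⟨k.val, hk⟩
        else
          merkleRoot h d (fun j => L ⟨2 ^ d + j.val, by
              have := j.isLt; have h2 : (2:ℕ) ^ (d+1) = 2 ^ d + 2 ^ d := by ring
              omega⟩)
      else
        -- leaf in the right half
        if hk : k.val < d then
          merkleSib h d (fun j => L ⟨2 ^ d + j.val, by
              have := j.isLt; have h2 : (2:ℕ) ^ (d+1) = 2 ^ d + 2 ^ d := by ring
              omega⟩) ⟨i.val - 2 ^ d, by
              have := i.isLt; have h2 : (2:ℕ) ^ (d+1) = 2 ^ d + 2 ^ d := by ring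
              omega⟩ ⟨k.val, hk⟩
        else
          merkleRoot h d (fun j => L ⟨j.val, by
              have := j.isLt
              have : (2:ℕ) ^ d ≤ 2 ^ (d+1) := Nat.pow_le_pow_right (by norm_num) (by omega)
              omega⟩)

/-- The verification fold: starting from `x`, for `k = 0, …, d-1` combine the
accumulator with `s k`, on the side determined by the `k`-th binary digit of `i`
(`acc ↦ h acc (s k)` if the digit is `0`, and `acc ↦ h (s k) acc` if it is `1`). -/
def merkleFold {α : Type*} (h : α → α → α) : (d : ℕ) → ℕ → α → (Fin d → α) → α
  | 0, _, x, _ => x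
  | d + 1, i, x, s =>
      merkleFold h d (i / 2)
        (if i % 2 = 0 then h x (s 0) else h (s 0) x)
        (fun k => s k.succ)

lemma merkleFold_mod {α : Type*} (h : α → α → α) :
    ∀ (d : ℕ) (i : ℕ) (x : α) (s : Fin d → α),
      merkleFold h d (i % 2 ^ d) x s = merkleFold h d i x s := by
  intro d
  induction d with
  | zero => intro i x s; rfl
  | succ d ih =>
    intro i x s
    have h1 : i % 2 ^ (d + 1) % 2 = i % 2 := by
      rw [pow_succ, mul_comm]
      exact Nat.mod_mod_of_dvd i ⟨2 ^ d, rfl⟩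
    have h2 : i % 2 ^ (d + 1) / 2 = i / 2 % 2 ^ d := by
      rw [pow_succ, mul_comm]
      exact Nat.mod_mul_right_div_self i 2 (2 ^ d)
    simp only [merkleFold, h1, h2, ih]

lemma merkleFold_top {α : Type*} (h : α → α → α) :
    ∀ (d : ℕ) (i : ℕ) (x : α) (s : Fin (d + 1) → α),
      merkleFold h (d + 1) i x s =
        (if i / 2 ^ d % 2 = 0 then
          h (merkleFold h d i x (fun k => s k.castSucc)) (s (Fin.last d))
        else
          h (s (Fin.last d)) (merkleFold h d i x (fun k => s k.castSucc))) := by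
  intro d
  induction d with
  | zero =>
    intro i x s
    simp only [merkleFold, pow_zero, Nat.div_one]
    split <;> rfl
  | succ d ih =>
    intro i x s
    show merkleFold h (d + 1) (i / 2) _ (fun k => s k.succ) = _
    rw [ih]
    have hdd : i / 2 / 2 ^ d = i / 2 ^ (d + 1) := by
      rw [Nat.div_div_eq_div_mul, pow_succ, mul_comm]
    rw [hdd]
    have hfold : merkleFold h (d + 1) i x (fun k => s k.castSucc)
        = merkleFold h d (i / 2) (if i % 2 = 0 then h x (s 0) else h (s 0) x)
            (fun k => s k.succ.castSucc) := rfl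
    rw [hfold]
    simp only [Fin.succ_castSucc, Fin.succ_last]

/-- Correctness of the Merkle-tree scheme: an honestly generated authentication path
for a leaf always re-derives the root. -/
theorem merkle_verify_correct {α : Type*} (h : α → α → α) (d : ℕ)
    (L : Fin (2 ^ d) → α) (i : Fin (2 ^ d)) :
    merkleFold h d i.val (L i) (merkleSib h d L i) = merkleRoot h d L := by
  induction d with
  | zero =>
    simp only [merkleRoot, merkleFold]
    congr 1
    exact Fin.ext (by omega)
  | succ d ih =>
    have h2 : (2:ℕ) ^ (d + 1) = 2 ^ d + 2 ^ d := by ring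
    set L₁ : Fin (2 ^ d) → α := fun j => L ⟨j.val, by
      have := j.isLt; omega⟩ with hL₁
    set L₂ : Fin (2 ^ d) → α := fun j => L ⟨2 ^ d + j.val, by
      have := j.isLt; omega⟩ with hL₂
    rw [merkleFold_top]
    by_cases hi : i.val < 2 ^ d
    · have hdiv : i.val / 2 ^ d = 0 := Nat.div_eq_of_lt hi
      rw [hdiv]
      simp only [Nat.zero_mod, if_pos rfl]
      show h _ _ = h (merkleRoot h d L₁) (merkleRoot h d L₂)
      congr 1
      · have hsib : (fun k : Fin d => merkleSib h (d+1) L i k.castSucc)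
            = merkleSib h d L₁ ⟨i.val, hi⟩ := by
          funext k
          show merkleSib h (d+1) L i k.castSucc = _
          simp only [merkleSib, Fin.coe_castSucc, dif_pos hi, dif_pos k.isLt]
          rfl
        rw [hsib]
        have hLi : L i = L₁ ⟨i.val, hi⟩ := by
          simp only [hL₁]
        rw [hLi]
        exact ih L₁ ⟨i.val, hi⟩
      · show merkleSib h (d+1) L i (Fin.last d) = _
        simp only [merkleSib, Fin.val_last, dif_pos hi, dif_neg (lt_irrefl d)]
        rfl
    · have hdiv : i.val / 2 ^ d = 1 := by
        have := i.isLt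
        have h1 : 1 ≤ i.val / 2 ^ d := (Nat.one_le_div_iff (by positivity)).mpr (by omega)
        have h2' : i.val / 2 ^ d < 2 := Nat.div_lt_of_lt_mul (by omega)
        omega
      rw [hdiv]
      simp only [Nat.one_mod, if_neg one_ne_zero]
      show h _ _ = h (merkleRoot h d L₁) (merkleRoot h d L₂)
      congr 1
      · show merkleSib h (d+1) L i (Fin.last d) = _
        simp only [merkleSib, Fin.val_last, dif_neg hi, dif_neg (lt_irrefl d)]
        rfl
      · have hi' : i.val - 2 ^ d < 2 ^ d := by have := i.isLt; omega
        have hsib : (fun k : Fin d => merkleSib h (d+1) L i k.castSucc)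
            = merkleSib h d L₂ ⟨i.val - 2 ^ d, hi'⟩ := by
          funext k
          show merkleSib h (d+1) L i k.castSucc = _
          simp only [merkleSib, Fin.coe_castSucc, dif_neg hi, dif_pos k.isLt]
          rfl
        rw [hsib]
        have hLi : L i = L₂ ⟨i.val - 2 ^ d, hi'⟩ := by
          simp only [hL₂]; congr 1; exact Fin.ext (by simp; omega)
        have hmod : i.val % 2 ^ d = i.val - 2 ^ d := by
          have := i.isLt
          rw [Nat.mod_eq_sub_mod (by omega), Nat.mod_eq_of_lt hi']
        rw [hLi, ← merkleFold_mod, hmod]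
        exact ih L₂ ⟨i.val - 2 ^ d, hi'⟩
end

section
/- Let α be a type and h : α → α → α be pairwise injective, i.e., h(a, b) = h(a', b') implies a = a' and b = b'. Fix a natural number d and an index i ∈ Fin (2^d), and define the verification fold fold(d, i, x, s), for x : α and s : Fin d → α, by starting with x and, for k = 0,…,d−1, replacing acc by h(acc, s(k)) if the k-th binary digit of i is 0 and by h(s(k), acc) if it is 1. Then the map (x, s) ↦ fold(d, i, x, s) is injective: if fold(d, i, x, s) = fold(d, i, x', s'), then x = x' and s = s'. -/
lemma merkleFold_injective_aux {α : Type*} (h : α → α → α)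
    (hinj : ∀ a b a' b', h a b = h a' b' → a = a' ∧ b = b') :
    ∀ (d : ℕ) (i : ℕ) (x x' : α) (s s' : Fin d → α),
      merkleFold h d i x s = merkleFold h d i x' s' → x = x' ∧ s = s' := by
  intro d
  induction d with
  | zero => exact fun i x x' s s' hfold => ⟨hfold, funext fun k => k.elim0⟩
  | succ d ih =>
      intro i x x' s s' hfold
      obtain ⟨h1, h2⟩ := ih (i / 2) _ _ _ _ hfold
      by_cases hp : i % 2 = 0
      · rw [if_pos hp, if_pos hp] at h1
        obtain ⟨hx, hs0⟩ := hinj _ _ _ _ h1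
        exact ⟨hx, funext fun k => Fin.cases hs0 (fun j => congrFun h2 j) k⟩
      · rw [if_neg hp, if_neg hp] at h1
        obtain ⟨hs0, hx⟩ := hinj _ _ _ _ h1
        exact ⟨hx, funext fun k => Fin.cases hs0 (fun j => congrFun h2 j) k⟩

/-- Idealized Uniqueness and Soundness of Merkle-tree verification: if `h` is
pairwise injective, then for a fixed depth `d` and leaf index `i`, the map
`(x, s) ↦ fold d i x s` is injective. -/
theorem merkleFold_injective {α : Type*} (h : α → α → α)
    (hinj : ∀ a b a' b', h a b = h a' b' → a = a' ∧ b = b')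
    (d : ℕ) (i : Fin (2 ^ d))
    (x x' : α) (s s' : Fin d → α)
    (hfold : merkleFold h d i.val x s = merkleFold h d i.val x' s') :
    x = x' ∧ s = s' :=
  merkleFold_injective_aux h hinj d i.val x x' s s' hfold
end

section
/- Let α be a type and h : α → α → α be pairwise injective, i.e., h(a, b) = h(a', b') implies a = a' and b = b'. Let d be a natural number, L : Fin (2^d) → α a leaf assignment with Merkle root r = Root(d, L) (defined recursively by Root(0, L) = L(0) and Root(d+1, L) = h(Root of left half, Root of right half)), and let i ∈ Fin (2^d). If x* ≠ L(i), then for every claimed sibling path s : Fin d → α, the verification fold fold(d, i, x*, s) — obtained by starting with x* and, for k = 0,…,d−1, combining with s(k) on the side determined by the k-th binary digit of i — is not equal to r. -/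
theorem two_pow_succ_eq (d : ℕ) : (2:ℕ) ^ (d + 1) = 2 ^ d + 2 ^ d := by ring

/-- The level-1 nodes: pair up adjacent leaves. -/
def merklePair {α : Type*} (h : α → α → α) (d : ℕ) (L : Fin (2 ^ (d + 1)) → α) :
    Fin (2 ^ d) → α :=
  fun j => h (L ⟨2 * j.val, by have := j.isLt; have := two_pow_succ_eq d; omega⟩)
             (L ⟨2 * j.val + 1, by have := j.isLt; have := two_pow_succ_eq d; omega⟩)

theorem merkleRoot_pair {α : Type*} (h : α → α → α) :
    ∀ (d : ℕ) (L : Fin (2 ^ (d + 1)) → α),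
      merkleRoot h (d + 1) L = merkleRoot h d (merklePair h d L) := by
  intro d
  induction d with
  | zero =>
      intro L
      simp [merkleRoot, merklePair]
  | succ d ih =>
      intro L
      show h _ _ = h _ _
      rw [ih, ih]
      congr 1 <;> apply congrArg (merkleRoot h d) <;> funext j <;>
        simp only [merklePair] <;> congr 1 <;> apply congrArg L <;> apply Fin.ext <;>
        simp <;> ring

/-- Deterministic core of the Integrity theorem for the authenticated PSI
constructions: with a collision-free compression function, no tampered leaf value
`x* ≠ L i` admits a sibling path that verifies against the announced root. -/
theorem merkle_integrity {α : Type*} (h : α → α → α)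
    (hinj : ∀ a b a' b', h a b = h a' b' → a = a' ∧ b = b')
    (d : ℕ) (L : Fin (2 ^ d) → α) (i : Fin (2 ^ d))
    (xstar : α) (hx : xstar ≠ L i) :
    ∀ s : Fin d → α, merkleFold h d i.val xstar s ≠ merkleRoot h d L := by
  induction d generalizing xstar with
  | zero =>
      intro s
      have hi0 : i = ⟨0, by norm_num⟩ := by
        apply Fin.ext
        have := i.isLt
        have h0 : (2:ℕ)^0 = 1 := pow_zero 2
        omega
      simpa [merkleFold, merkleRoot, hi0] using hx
  | succ d ih =>
      intro s
      rw [merkleRoot_pair]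
      have hlt : i.val / 2 < 2 ^ d := by
        have := i.isLt; have := two_pow_succ_eq d; omega
      set j : Fin (2 ^ d) := ⟨i.val / 2, hlt⟩ with hj
      have key : (if i.val % 2 = 0 then h xstar (s 0) else h (s 0) xstar) ≠ merklePair h d L j := by
        rcases Nat.even_or_odd i.val with he | ho
        · have hm : i.val % 2 = 0 := Nat.even_iff.mp he
          simp only [hm, if_pos rfl, merklePair]
          intro hc
          have heq := (hinj _ _ _ _ hc).1
          apply hx
          rw [heq]
          apply congrArg L; apply Fin.ext
          show 2 * (i.val / 2) = i.val
          omega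
        · have hm : i.val % 2 = 1 := Nat.odd_iff.mp ho
          simp only [hm, merklePair]
          rw [if_neg (by omega)]
          intro hc
          have heq := (hinj _ _ _ _ hc).2
          apply hx
          rw [heq]
          apply congrArg L; apply Fin.ext
          show 2 * (i.val / 2) + 1 = i.val
          omega
      have := ih (merklePair h d L) j _ key (fun k => s k.succ)
      simpa [merkleFold, hj] using this
end
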